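/- Let ω > 0, γ > 0, c ≠ 0 real, and D ∈ ℝ. Define λ* = iω − (c²/ω)·[iD + 2/(γω)]^{-1} where iD + 2/(γω) ≠ 0. Then Re λ* = −(2γc²)/(4 + γ²ω²D²) < 0 and Im λ* = ω + (c²/ω)·D/(4/(γ²ω²) + D²). -/
import Mathlib


/-- Explicit real and imaginary parts of the approximate eigenvalue
`λ* = iω - (c²/ω)·(iD + 2/(γω))⁻¹`, showing in particular `Re λ* < 0`. -/
theorem stmt_9 (ω γ c D : ℝ) (hω : 0 < ω) (hγ : 0 < γ) (hc : c ≠ 0)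
    (hden : Complex.I * (D : ℂ) + 2 / ((γ : ℂ) * (ω : ℂ)) ≠ 0)
    (lamStar : ℂ)
    (hlam : lamStar = Complex.I * (ω : ℂ)
      - ((c : ℂ) ^ 2 / (ω : ℂ)) * (Complex.I * (D : ℂ) + 2 / ((γ : ℂ) * (ω : ℂ)))⁻¹) :
    lamStar.re = -(2 * γ * c ^ 2) / (4 + γ ^ 2 * ω ^ 2 * D ^ 2) ∧
    lamStar.re < 0 ∧
    lamStar.im = ω + (c ^ 2 / ω) * (D / (4 / (γ ^ 2 * ω ^ 2) + D ^ 2)) := by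
  have h1 : (0:ℝ) < 4 + γ ^ 2 * ω ^ 2 * D ^ 2 := by positivity
  have hωγ : γ * ω ≠ 0 := by positivity
  have h3 : ω ^ 6 * γ ^ 4 * 4 + ω ^ 8 * γ ^ 6 * D ^ 2 ≠ 0 := by positivity
  have h4 : (4:ℝ) / (γ ^ 2 * ω ^ 2) + D ^ 2 ≠ 0 := by positivity
  have hre : lamStar.re = -(2 * γ * c ^ 2) / (4 + γ ^ 2 * ω ^ 2 * D ^ 2) := by
    rw [hlam, show ((c:ℂ))^2 = ((c^2 : ℝ) : ℂ) by push_cast; ring]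
    simp only [Complex.sub_re, Complex.mul_re, Complex.mul_im, Complex.div_re, Complex.div_im,
      Complex.inv_re, Complex.inv_im, Complex.add_re, Complex.add_im, Complex.I_re, Complex.I_im,
      Complex.ofReal_re, Complex.ofReal_im, Complex.normSq_apply, Complex.re_ofNat,
      Complex.im_ofNat]
    field_simp
    ring_nf
    field_simp
    ring
  refine ⟨hre, ?_, ?_⟩
  · rw [hre]
    apply div_neg_of_neg_of_pos
    · have : (0:ℝ) < c ^ 2 := by positivity
      nlinarith
    · exact h1
  · rw [hlam, show ((c:ℂ))^2 = ((c^2 : ℝ) : ℂ) by push_cast; ring]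
    simp only [Complex.sub_im, Complex.mul_re, Complex.mul_im, Complex.div_re, Complex.div_im,
      Complex.inv_re, Complex.inv_im, Complex.add_re, Complex.add_im, Complex.I_re, Complex.I_im,
      Complex.ofReal_re, Complex.ofReal_im, Complex.normSq_apply, Complex.re_ofNat,
      Complex.im_ofNat]
    field_simp
    ring_nf
    field_simp
    ring
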